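/- Let X be a measurable space, μ_P and μ_N probability measures on X, π ∈ [0,1], μ_U = π • μ_P + (1 − π) • μ_N, f : X → ℝ measurable, and ℓ : ℝ → ℝ a bounded measurable loss with the constant-sum property ℓ(z) + ℓ(−z) = C for all z ∈ ℝ. Suppose X_1, …, X_m are i.i.d. random variables with law μ_P and Z_1, …, Z_n are i.i.d. random variables with law μ_U, and define the PU empirical risk R̂ = 2π · (1/m) Σ_{j=1}^m ℓ(f(X_j)) − (1/n) Σ_{j=1}^n ℓ(f(Z_j)) + (1 − π) C. Then R̂ is an unbiased estimator of the positive–negative risk: E[R̂] = π ∫ ℓ(f(x)) dμ_P(x) + (1 − π) ∫ ℓ(−f(x)) dμ_N(x). -/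

import Mathlib

open MeasureTheory ProbabilityTheory

lemma pu_aux_integrable {α : Type*} [MeasurableSpace α] (μ : Measure α)
    [IsProbabilityMeasure μ] (g : α → ℝ) (hg : Measurable g) (B : ℝ)
    (hB : ∀ a, |g a| ≤ B) : Integrable g μ :=
  (integrable_const B).mono' hg.aestronglyMeasurable (Filter.Eventually.of_forall hB)

/-- Unbiasedness of the PU empirical risk estimator.  With unlabeled marginal
`μ_U = π • μ_P + (1 − π) • μ_N`, a bounded measurable loss `ℓ` satisfying the
constant-sum property `ℓ(z) + ℓ(−z) = C`, i.i.d. positives `X_j ∼ μ_P` and i.i.d.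
unlabeled points `Z_j ∼ μ_U`, the PU empirical risk
`R̂ = 2π (1/m) Σ_j ℓ(f(X_j)) − (1/n) Σ_j ℓ(f(Z_j)) + (1 − π) C`
satisfies `E[R̂] = π E_{μ_P}[ℓ(f)] + (1 − π) E_{μ_N}[ℓ(−f)]`. -/
theorem pu_empirical_risk_unbiased
    {X : Type*} [MeasurableSpace X]
    (μP μN : Measure X) [IsProbabilityMeasure μP] [IsProbabilityMeasure μN]
    (π : ℝ) (hπ0 : 0 ≤ π) (hπ1 : π ≤ 1)
    (μU : Measure X)
    (hμU : μU = ENNReal.ofReal π • μP + ENNReal.ofReal (1 - π) • μN)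
    (f : X → ℝ) (hf : Measurable f)
    (ℓ : ℝ → ℝ) (hℓ : Measurable ℓ) (B : ℝ) (hB : ∀ z : ℝ, |ℓ z| ≤ B)
    (C : ℝ) (hsum : ∀ z : ℝ, ℓ z + ℓ (-z) = C)
    {Ω : Type*} [MeasurableSpace Ω] (P : Measure Ω) [IsProbabilityMeasure P]
    (m n : ℕ) (hm : 0 < m) (hn : 0 < n)
    (Xs : Fin m → Ω → X) (Zs : Fin n → Ω → X)
    (hXmeas : ∀ j, Measurable (Xs j)) (hZmeas : ∀ j, Measurable (Zs j))
    (hXlaw : ∀ j, Measure.map (Xs j) P = μP)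
    (hZlaw : ∀ j, Measure.map (Zs j) P = μU)
    (hXindep : iIndepFun Xs P)
    (hZindep : iIndepFun Zs P)
    (Rhat : Ω → ℝ)
    (hRhat : Rhat = fun ω =>
      2 * π * ((1 / (m : ℝ)) * ∑ j : Fin m, ℓ (f (Xs j ω)))
        - (1 / (n : ℝ)) * ∑ j : Fin n, ℓ (f (Zs j ω)) + (1 - π) * C) :
    ∫ ω, Rhat ω ∂P =
      π * ∫ x, ℓ (f x) ∂μP + (1 - π) * ∫ x, ℓ (-f x) ∂μN := by
  have hmeas : Measurable fun x => ℓ (f x) := hℓ.comp hf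
  have hmeas' : Measurable fun x => ℓ (-f x) := hℓ.comp hf.neg
  -- single-sample expectations
  have hEX : ∀ j, ∫ ω, ℓ (f (Xs j ω)) ∂P = ∫ x, ℓ (f x) ∂μP := by
    intro j
    rw [← hXlaw j, integral_map (hXmeas j).aemeasurable hmeas.aestronglyMeasurable]
  have hEZ : ∀ j, ∫ ω, ℓ (f (Zs j ω)) ∂P = ∫ x, ℓ (f x) ∂μU := by
    intro j
    rw [← hZlaw j, integral_map (hZmeas j).aemeasurable hmeas.aestronglyMeasurable]
  -- integrability of each summand
  have hIX : ∀ j, Integrable (fun ω => ℓ (f (Xs j ω))) P := fun j =>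
    pu_aux_integrable P _ (hmeas.comp (hXmeas j)) B (fun ω => hB _)
  have hIZ : ∀ j, Integrable (fun ω => ℓ (f (Zs j ω))) P := fun j =>
    pu_aux_integrable P _ (hmeas.comp (hZmeas j)) B (fun ω => hB _)
  have hISX : Integrable (fun ω => ∑ j : Fin m, ℓ (f (Xs j ω))) P :=
    integrable_finset_sum _ (fun j _ => hIX j)
  have hISZ : Integrable (fun ω => ∑ j : Fin n, ℓ (f (Zs j ω))) P :=
    integrable_finset_sum _ (fun j _ => hIZ j)
  -- compute E[Rhat]
  subst hRhat
  have h1 : Integrable (fun ω => 2 * π * ((1 / (m : ℝ)) * ∑ j : Fin m, ℓ (f (Xs j ω)))) P :=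
    (hISX.const_mul _).const_mul _
  have h2 : Integrable (fun ω => (1 / (n : ℝ)) * ∑ j : Fin n, ℓ (f (Zs j ω))) P :=
    hISZ.const_mul _
  have h3 : Integrable (fun ω => 2 * π * ((1 / (m : ℝ)) * ∑ j : Fin m, ℓ (f (Xs j ω)))
      - (1 / (n : ℝ)) * ∑ j : Fin n, ℓ (f (Zs j ω))) P := h1.sub h2
  simp only []
  rw [integral_add h3 (integrable_const _), integral_sub h1 h2,
    integral_const_mul, integral_const_mul, integral_const_mul,
    integral_finset_sum _ (fun j _ => hIX j), integral_finset_sum _ (fun j _ => hIZ j),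
    integral_const]
  simp only [hEX, hEZ, Finset.sum_const, Finset.card_univ, Fintype.card_fin, nsmul_eq_mul,
    measure_univ, probReal_univ, ENNReal.toReal_one, smul_eq_mul, one_mul]
  have hm' : (m : ℝ) ≠ 0 := Nat.cast_ne_zero.mpr hm.ne'
  have hn' : (n : ℝ) ≠ 0 := Nat.cast_ne_zero.mpr hn.ne'
  -- unlabeled integral decomposition
  have hIP : Integrable (fun x => ℓ (f x)) μP := pu_aux_integrable μP _ hmeas B (fun x => hB _)
  have hIN : Integrable (fun x => ℓ (f x)) μN := pu_aux_integrable μN _ hmeas B (fun x => hB _)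
  have hIN' : Integrable (fun x => ℓ (-f x)) μN := pu_aux_integrable μN _ hmeas' B (fun x => hB _)
  have hU : ∫ x, ℓ (f x) ∂μU = π * ∫ x, ℓ (f x) ∂μP + (1 - π) * ∫ x, ℓ (f x) ∂μN := by
    rw [hμU, integral_add_measure (hIP.smul_measure (by simp)) (hIN.smul_measure (by simp)),
      integral_smul_measure, integral_smul_measure,
      ENNReal.toReal_ofReal hπ0, ENNReal.toReal_ofReal (by linarith)]
    simp [smul_eq_mul]
  -- constant-sum identity
  have hCN : ∫ x, ℓ (f x) ∂μN = C - ∫ x, ℓ (-f x) ∂μN := by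
    have : (fun x => ℓ (f x)) = fun x => C - ℓ (-f x) := by
      funext x; have := hsum (f x); linarith
    rw [this, integral_sub (integrable_const _) hIN', integral_const]
    simp
  rw [hU, hCN]
  field_simp
  ring
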